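/- Let H be a complex Hilbert space and A, B bounded linear operators on H. If the range of A is contained in the range of B, then there exists a bounded operator X with B ∘ X = A and range X ⊆ (ker B)ᗮ. -/

import Mathlib

open Filter Topology

theorem douglas_range_subset_implies_factorization
    {H : Type*} [NormedAddCommGroup H] [InnerProductSpace ℂ H] [CompleteSpace H]
    (A B : H →L[ℂ] H)
    (h : LinearMap.range (A : H →ₗ[ℂ] H) ≤ LinearMap.range (B : H →ₗ[ℂ] H)) :
    ∃ X : H →L[ℂ] H, B ∘L X = A ∧ LinearMap.range (X : H →ₗ[ℂ] H) ≤ (LinearMap.ker (B : H →ₗ[ℂ] H))ᗮ := by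
  classical
  set K : Submodule ℂ H := (LinearMap.ker (B : H →ₗ[ℂ] H))ᗮ with hK
  have hKclosed : IsClosed (LinearMap.ker (B : H →ₗ[ℂ] H) : Set H) := ContinuousLinearMap.isClosed_ker B
  have hKo : Kᗮ = LinearMap.ker (B : H →ₗ[ℂ] H) := by
    rw [hK, Submodule.orthogonal_orthogonal_eq_closure]
    exact hKclosed.submodule_topologicalClosure_eq
  have hmem : ∀ x : H, A x ∈ LinearMap.range (B : H →ₗ[ℂ] H) := fun x => h ⟨x, rfl⟩
  let g : H → H := fun x => (hmem x).choose
  have hg : ∀ x, B (g x) = A x := fun x => (hmem x).choose_spec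
  let X₀ : H → H := fun x => (K.orthogonalProjectionOnto (g x) : H)
  have hXK : ∀ x, X₀ x ∈ K := fun x => (K.orthogonalProjectionOnto (g x)).2
  have hBX : ∀ x, B (X₀ x) = A x := by
    intro x
    have h1 : g x - X₀ x ∈ Kᗮ := K.sub_starProjection_mem_orthogonal (g x)
    rw [hKo, LinearMap.mem_ker, map_sub, sub_eq_zero, ContinuousLinearMap.coe_coe] at h1
    rw [← h1, hg]
  have key : ∀ y z, y ∈ K → z ∈ K → B y = B z → y = z := by
    intro y z hy hz hyz
    have h2 : y - z ∈ K ⊓ Kᗮ :=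
      ⟨K.sub_mem hy hz, hKo ▸ LinearMap.mem_ker.mpr (by rw [map_sub, ContinuousLinearMap.coe_coe, hyz, sub_self])⟩
    rw [Submodule.inf_orthogonal_eq_bot K] at h2
    exact sub_eq_zero.mp (by simpa using h2)
  let L : H →ₗ[ℂ] H :=
    { toFun := X₀
      map_add' := fun x y => by
        refine key _ _ (hXK _) (K.add_mem (hXK x) (hXK y)) ?_
        rw [map_add, hBX, hBX, hBX, map_add]
      map_smul' := fun c x => by
        refine key _ _ (hXK _) (K.smul_mem c (hXK x)) ?_
        rw [map_smul, hBX, hBX, map_smul]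
        rfl }
  have hclosed : ∀ (u : ℕ → H) (x y), Tendsto u atTop (𝓝 x) →
      Tendsto (⇑L ∘ u) atTop (𝓝 y) → y = L x := by
    intro u x y hu hLu
    have hyK : y ∈ K := (LinearMap.ker (B : H →ₗ[ℂ] H)).isClosed_orthogonal.mem_of_tendsto hLu
      (Filter.Eventually.of_forall fun n => hXK (u n))
    have h1 : Tendsto (fun n => B (L (u n))) atTop (𝓝 (B y)) :=
      (B.continuous.tendsto y).comp hLu
    have h2 : Tendsto (fun n => B (L (u n))) atTop (𝓝 (A x)) := by
      have : (fun n => B (L (u n))) = fun n => A (u n) := funext fun n => hBX (u n)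
      rw [this]
      exact (A.continuous.tendsto x).comp hu
    have hBy : B y = A x := tendsto_nhds_unique h1 h2
    exact key y (L x) hyK (hXK x) (hBy.trans (hBX x).symm)
  refine ⟨ContinuousLinearMap.ofSeqClosedGraph hclosed, ?_, ?_⟩
  · ext x
    exact hBX x
  · rintro _ ⟨x, rfl⟩
    exact hXK x
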